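/- Let n = p^r be a prime power and let k be an integer with 2 ≤ k ≤ n. Then for any nonnegative integers r_1, ..., r_k with (r_1 - 1) + ... + (r_k - 1) = n - k, the p-adic valuation of n^{k-1} is strictly greater than the p-adic valuation of (n-1)(n-2)⋯(n-k+1) · (n-k)!/((r_1 - 1)! ⋯ (r_k - 1)!). -/

import Mathlib

open Finset

private lemma aux_sum_digits_pos {p m : ℕ} (hm : m ≠ 0) : 1 ≤ (p.digits m).sum := by
  have hne : p.digits m ≠ [] := Nat.digits_ne_nil_iff_ne_zero.mpr hm
  have hlast := Nat.getLast_digit_ne_zero p hm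
  have hmem := List.getLast_mem hne
  have hle := List.single_le_sum (l := p.digits m) (fun x _ => Nat.zero_le x) _ hmem
  omega

private lemma aux_val_factorial_le {p m : ℕ} [hp : Fact p.Prime] (hm : m ≠ 0) :
    padicValNat p (Nat.factorial m) ≤ m - 1 := by
  have h := sub_one_mul_padicValNat_factorial (p := p) m
  have hs := aux_sum_digits_pos (p := p) hm
  have hp2 : 2 ≤ p := hp.out.two_le
  have hle : padicValNat p (Nat.factorial m) ≤ (p - 1) * padicValNat p (Nat.factorial m) :=
    Nat.le_mul_of_pos_left _ (by omega)
  omega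

private lemma aux_val_pow_sub {p r m : ℕ} [hp : Fact p.Prime] (hm : 1 ≤ m) (hmr : m < p ^ r) :
    padicValNat p (p ^ r - m) = padicValNat p m := by
  set t := padicValNat p m with ht
  have htm : p ^ t ∣ m := pow_padicValNat_dvd
  have hpt : p ^ t ≤ m := Nat.le_of_dvd (by omega) htm
  have htr : t < r := by
    by_contra h
    push_neg at h
    exact absurd (lt_of_le_of_lt hpt hmr)
      (not_lt.mpr (Nat.pow_le_pow_right hp.out.pos h))
  have h1 : p ^ t ∣ p ^ r - m := Nat.dvd_sub (pow_dvd_pow p htr.le) htm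
  have h2 : ¬ p ^ (t + 1) ∣ m := pow_succ_padicValNat_not_dvd (by omega)
  have h3 : ¬ p ^ (t + 1) ∣ p ^ r - m := by
    intro hdvd
    have hdr : p ^ (t + 1) ∣ p ^ r := pow_dvd_pow p (by omega)
    have := Nat.dvd_sub hdr hdvd
    rw [Nat.sub_sub_self hmr.le] at this
    exact h2 this
  have hne : p ^ r - m ≠ 0 := by omega
  rw [padicValNat_dvd_iff_le hne] at h1
  rw [padicValNat_dvd_iff_le hne] at h3
  omega

private lemma aux_div_sum_le {k m : ℕ} (hm : 0 < m) (hk : 0 < k) (f : Fin k → ℕ) :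
    (∑ j, f j) / m ≤ (∑ j, f j / m) + (k - 1) := by
  have hle : ∀ j : Fin k, f j ≤ m * (f j / m) + (m - 1) := by
    intro j
    have h1 := Nat.div_add_mod (f j) m
    have h2 := Nat.mod_lt (f j) hm
    omega
  have hsum : ∑ j, f j ≤ m * (∑ j, f j / m) + k * (m - 1) := by
    calc ∑ j, f j ≤ ∑ j : Fin k, (m * (f j / m) + (m - 1)) :=
          Finset.sum_le_sum (fun j _ => hle j)
      _ = m * (∑ j, f j / m) + k * (m - 1) := by
          rw [Finset.sum_add_distrib, Finset.sum_const, ← Finset.mul_sum]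
          simp [mul_comm]
  have hlt : (∑ j, f j) / m < (∑ j, f j / m) + k := by
    rw [Nat.div_lt_iff_lt_mul hm]
    obtain ⟨m', rfl⟩ : ∃ m', m = m' + 1 := ⟨m - 1, by omega⟩
    simp only [Nat.add_sub_cancel] at hsum
    nlinarith [hsum, hk]
  omega

private lemma aux_padicValNat_prod {p : ℕ} (hp : p.Prime) {α : Type*} {s : Finset α}
    {g : α → ℕ} (hg : ∀ x ∈ s, g x ≠ 0) :
    padicValNat p (∏ x ∈ s, g x) = ∑ x ∈ s, padicValNat p (g x) := by
  rw [← Nat.factorization_def _ hp, Nat.factorization_prod hg]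
  rw [Finsupp.finset_sum_apply]
  exact Finset.sum_congr rfl fun x _ => Nat.factorization_def _ hp

theorem stmt_3 (p r n k : ℕ) (hp : p.Prime) (hr : 0 < r) (hn : n = p ^ r)
    (hk2 : 2 ≤ k) (hkn : k ≤ n) (R : Fin k → ℕ) (hR : ∀ j, 1 ≤ R j)
    (hsum : ∑ j, (R j - 1) = n - k) :
    padicValNat p ((∏ i ∈ Finset.range (k - 1), (n - 1 - i)) *
        Nat.multinomial Finset.univ (fun j => R j - 1))
      < padicValNat p (n ^ (k - 1)) := by
  haveI : Fact p.Prime := ⟨hp⟩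
  have hp2 : 2 ≤ p := hp.two_le
  have hpr : p ≤ p ^ r := Nat.le_self_pow (by omega) p
  have hn2 : 2 ≤ n := by omega
  set f : Fin k → ℕ := fun j => R j - 1 with hf
  set N := n - k with hNdef
  have hsum' : ∑ j, f j = N := hsum
  have hNlt : N < p ^ r := by omega
  have hlogN : Nat.log p N < r := by
    rcases Nat.eq_zero_or_pos N with h | h
    · simpa [h] using hr
    · exact Nat.log_lt_of_lt_pow (by omega) hNlt
  -- RHS valuation
  have hrhs : padicValNat p (n ^ (k - 1)) = (k - 1) * r := by
    rw [hn, ← pow_mul, padicValNat.prime_pow, mul_comm]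
  -- multinomial valuation bound
  have hmultpos := Nat.multinomial_pos (Finset.univ : Finset (Fin k)) f
  have hspec := Nat.multinomial_spec (Finset.univ : Finset (Fin k)) f
  have hprodfact_ne : (∏ j, Nat.factorial (f j)) ≠ 0 :=
    Finset.prod_ne_zero_iff.mpr (fun j _ => Nat.factorial_ne_zero _)
  have hval_eq : padicValNat p (∏ j, Nat.factorial (f j)) + padicValNat p (Nat.multinomial Finset.univ f)
      = padicValNat p (Nat.factorial N) := by
    rw [← padicValNat.mul hprodfact_ne hmultpos.ne', hspec, hsum']
  have hfle : ∀ j : Fin k, f j ≤ N := by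
    intro j
    rw [← hsum']
    exact Finset.single_le_sum (f := f) (fun i _ => Nat.zero_le _) (Finset.mem_univ j)
  have hvprodfact : padicValNat p (∏ j, Nat.factorial (f j)) = ∑ j, ∑ i ∈ Finset.Ico 1 r, f j / p ^ i := by
    rw [aux_padicValNat_prod hp (fun j _ => Nat.factorial_ne_zero _)]
    refine Finset.sum_congr rfl fun j _ => ?_
    exact padicValNat_factorial (lt_of_le_of_lt (Nat.log_mono_right (hfle j)) hlogN)
  have hvNfact : padicValNat p (Nat.factorial N) = ∑ i ∈ Finset.Ico 1 r, N / p ^ i :=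
    padicValNat_factorial hlogN
  have hNbound : ∑ i ∈ Finset.Ico 1 r, N / p ^ i
      ≤ (∑ j, ∑ i ∈ Finset.Ico 1 r, f j / p ^ i) + (r - 1) * (k - 1) := by
    have hstep : ∀ i ∈ Finset.Ico 1 r, N / p ^ i ≤ (∑ j, f j / p ^ i) + (k - 1) := by
      intro i _
      rw [← hsum']
      exact aux_div_sum_le ((Nat.pow_pos (n := i) (by omega))) (by omega) f
    calc ∑ i ∈ Finset.Ico 1 r, N / p ^ i
        ≤ ∑ i ∈ Finset.Ico 1 r, ((∑ j, f j / p ^ i) + (k - 1)) :=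
          Finset.sum_le_sum hstep
      _ = (∑ i ∈ Finset.Ico 1 r, ∑ j, f j / p ^ i) + (r - 1) * (k - 1) := by
          rw [Finset.sum_add_distrib, Finset.sum_const, Nat.card_Ico, smul_eq_mul]
      _ = (∑ j, ∑ i ∈ Finset.Ico 1 r, f j / p ^ i) + (r - 1) * (k - 1) := by
          rw [Finset.sum_comm]
  have hvmult_le : padicValNat p (Nat.multinomial Finset.univ f) ≤ (r - 1) * (k - 1) := by
    omega
  -- product valuation
  have hfacne : ∀ i ∈ Finset.range (k - 1), n - 1 - i ≠ 0 := by
    intro i hi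
    rw [Finset.mem_range] at hi
    omega
  have hprodval : padicValNat p (∏ i ∈ Finset.range (k - 1), (n - 1 - i))
      = padicValNat p (Nat.factorial (k - 1)) := by
    rw [aux_padicValNat_prod hp hfacne, ← Finset.prod_range_add_one_eq_factorial,
      aux_padicValNat_prod hp (fun i _ => Nat.succ_ne_zero i)]
    refine Finset.sum_congr rfl fun i hi => ?_
    rw [Finset.mem_range] at hi
    have h1 : n - 1 - i = p ^ r - (i + 1) := by omega
    rw [h1]
    exact aux_val_pow_sub (by omega) (by omega)
  have hprodne : (∏ i ∈ Finset.range (k - 1), (n - 1 - i)) ≠ 0 :=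
    Finset.prod_ne_zero_iff.mpr hfacne
  have hfactle : padicValNat p (Nat.factorial (k - 1)) ≤ k - 2 := by
    have := aux_val_factorial_le (p := p) (m := k - 1) (by omega)
    omega
  rw [padicValNat.mul hprodne (by omega), hrhs, hprodval]
  have hkey : (r - 1) * (k - 1) + (k - 1) = (k - 1) * r := by
    cases r with
    | zero => omega
    | succ r' => simp [Nat.succ_sub_one]; ring
  omega
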